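/- The rational function F(t_1,…,t_n) = ∏_{1≤i<j≤n} (1 − t_i/t_j)/(q − q⁻¹ t_i/t_j) is q-symmetric: π(σ)F = F for every σ ∈ S_n. -/

import Mathlib

noncomputable section

open scoped TensorProduct
open MvPolynomial

/-! ## Rational functions and the q-symmetrization machinery -/

variable (K : Type) [Field K] (ι : Type)

/-- The field `K(t)` of rational functions in the variables `t_i`, `i : ι`. -/
abbrev RatF := FractionRing (MvPolynomial ι K)

/-- The variable `t_i` as a rational function. -/
def tvar (i : ι) : RatF K ι := algebraMap (MvPolynomial ι K) (RatF K ι) (X i)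

/-- A scalar `c : K` as a constant rational function. -/
def cst (c : K) : RatF K ι := algebraMap K (RatF K ι) c

/-- Substitution of variables `t_i ↦ t_{f i}` along an injective map `f`, as a `K`-algebra
endomorphism of the field of rational functions. -/
def renHom (f : ι → ι) (hf : Function.Injective f) : RatF K ι →ₐ[K] RatF K ι :=
  IsFractionRing.liftAlgHom (R := K)
    (g := (IsScalarTower.toAlgHom K (MvPolynomial ι K) (RatF K ι)).comp (rename f))
    ((IsFractionRing.injective _ _).comp (rename_injective f hf))

variable (A : Type) [Ring A] [Algebra K A]

/-- The algebra `A(t) = A ⊗_K K(t)` of `A`-valued rational functions. -/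
abbrev AVal := A ⊗[K] RatF K ι

/-- The embedding `K(t) → A(t)`. -/
def inF : RatF K ι →ₐ[K] AVal K ι A := Algebra.TensorProduct.includeRight

/-- Substitution of variables `t_i ↦ t_{f i}` on `A`-valued rational functions. -/
def renA (f : ι → ι) (hf : Function.Injective f) : AVal K ι A →ₐ[K] AVal K ι A :=
  Algebra.TensorProduct.map (AlgHom.id K A) (renHom K ι f hf)

/-- Extension of a permutation of `Fin k` to a permutation of the whole variable index set `ι`
along an injective enumeration `v : Fin k → ι` of some of the variables. -/
def extPerm {k : ℕ} (v : Fin k → ι) (hv : Function.Injective v) (σ : Equiv.Perm (Fin k)) :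
    Equiv.Perm ι :=
  letI := Classical.decPred (· ∈ Set.range v)
  σ.extendDomain (Equiv.ofInjective v hv)

variable (q : K)

/-- The elementary weight `w(t_i/t_j) = (q⁻¹ − q t_i/t_j)/(q − q⁻¹ t_i/t_j)`. -/
def wfac (i j : ι) : RatF K ι :=
  (cst K ι q⁻¹ - cst K ι q * (tvar K ι i / tvar K ι j)) /
    (cst K ι q - cst K ι q⁻¹ * (tvar K ι i / tvar K ι j))

/-- The weight `∏_{ℓ<ℓ', σ(ℓ)>σ(ℓ')} w(t_{σ(ℓ')}/t_{σ(ℓ)})` of the operator `π(σ)` acting on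
functions of the variables `t_{v 0}, …, t_{v (k-1)}`. -/
def qWeight {k : ℕ} (v : Fin k → ι) (σ : Equiv.Perm (Fin k)) : RatF K ι :=
  ∏ p ∈ Finset.univ.filter (fun p : Fin k × Fin k => p.1 < p.2 ∧ σ p.2 < σ p.1),
    wfac K ι q (v (σ p.2)) (v (σ p.1))

/-- The operator `π(σ)`, `σ ∈ S_k`:
`π(σ)G = ∏_{ℓ<ℓ', σ(ℓ)>σ(ℓ')} w(t_{σ(ℓ')}/t_{σ(ℓ)}) ⬝ G(t_{σ(1)},…,t_{σ(k)})`, acting on `A`-valued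
rational functions of the variables `t_{v 0}, …, t_{v (k-1)}`. -/
def piOp {k : ℕ} (v : Fin k → ι) (hv : Function.Injective v) (σ : Equiv.Perm (Fin k)) :
    AVal K ι A → AVal K ι A := fun G =>
  inF K ι A (qWeight K ι q v σ) * renA K ι A (extPerm ι v hv σ) (Equiv.injective _) G

/-- The operator `π(σ_{i,j})` attached to a transposition:
`π(σ_{i,j})G = w(t_i/t_j) ⬝ (G with t_i, t_j interchanged)`.  For `j = i+1` this is the
operator `π(σ_{i,i+1})` of the paper. -/
def piElem (i j : ι) : AVal K ι A → AVal K ι A := fun G =>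
  letI := Classical.decEq ι
  inF K ι A (wfac K ι q i j) * renA K ι A (Equiv.swap i j) (Equiv.injective _) G

/-- The `q`-symmetrization operator `Sym̄ = (1/k!) ∑_{σ ∈ S_k} π(σ)` over the variables
`t_{v 0}, …, t_{v (k-1)}`. -/
def qSym {k : ℕ} (v : Fin k → ι) (hv : Function.Injective v) :
    AVal K ι A → AVal K ι A := fun G =>
  ((k.factorial : K))⁻¹ • ∑ σ : Equiv.Perm (Fin k), piOp K ι A q v hv σ G


/-- The rational function `F(t_1,…,t_n) = ∏_{i<j} (1 − t_i/t_j)/(q − q⁻¹ t_i/t_j)`. -/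
def exProd (K : Type) [Field K] (q : K) (n : ℕ) : RatF K (Fin n) :=
  ∏ p ∈ Finset.univ.filter (fun p : Fin n × Fin n => p.1 < p.2),
    (1 - tvar K (Fin n) p.1 / tvar K (Fin n) p.2) /
      (cst K (Fin n) q - cst K (Fin n) q⁻¹ * (tvar K (Fin n) p.1 / tvar K (Fin n) p.2))

-- auxiliary lemmas


lemma inF_renA (f : ι → ι) (hf : Function.Injective f) (x : RatF K ι) :
    renA K ι A f hf (inF K ι A x) = inF K ι A (renHom K ι f hf x) := by
  simp [renA, inF, Algebra.TensorProduct.includeRight_apply, Algebra.TensorProduct.map_tmul]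

lemma renHom_tvar (f : ι → ι) (hf : Function.Injective f) (i : ι) :
    renHom K ι f hf (tvar K ι i) = tvar K ι (f i) := by
  unfold renHom tvar
  exact (IsFractionRing.liftAlgHom_apply _ _).trans ((IsFractionRing.lift_algebraMap _ _).trans (by simp))

lemma renHom_cst (f : ι → ι) (hf : Function.Injective f) (c : K) :
    renHom K ι f hf (cst K ι c) = cst K ι c :=
  (renHom K ι f hf).commutes c

lemma tvar_ne_zero (i : ι) : tvar K ι i ≠ 0 := by
  intro h
  exact X_ne_zero (R := K) i
    (IsFractionRing.injective (MvPolynomial ι K) (RatF K ι) (by rw [map_zero]; exact h))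

lemma cst_ne_zero {c : K} (hc : c ≠ 0) : cst K ι c ≠ 0 := by
  simpa [cst] using (map_ne_zero_iff _ (algebraMap K (RatF K ι)).injective).2 hc

lemma cst_inv (c : K) : cst K ι c⁻¹ = (cst K ι c)⁻¹ := map_inv₀ (algebraMap K (RatF K ι)) c

lemma denom_ne_zero (hq : q ≠ 0) {i j : ι} (hij : i ≠ j) :
    cst K ι q - cst K ι q⁻¹ * (tvar K ι i / tvar K ι j) ≠ 0 := by
  classical
  intro h
  have hj := tvar_ne_zero K ι j
  have h2 : cst K ι q * tvar K ι j - cst K ι q⁻¹ * tvar K ι i = 0 := by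
    have : cst K ι q * tvar K ι j - cst K ι q⁻¹ * tvar K ι i =
        (cst K ι q - cst K ι q⁻¹ * (tvar K ι i / tvar K ι j)) * tvar K ι j := by
      field_simp
    rw [this, h, zero_mul]
  have hc : cst K ι q * tvar K ι j - cst K ι q⁻¹ * tvar K ι i =
      algebraMap (MvPolynomial ι K) (RatF K ι) (C q * X j - C q⁻¹ * X i) := by
    simp [cst, tvar, IsScalarTower.algebraMap_apply K (MvPolynomial ι K) (RatF K ι), map_sub,
      map_mul]
  rw [hc, (map_eq_zero_iff _ (IsFractionRing.injective (MvPolynomial ι K) (RatF K ι)))] at h2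
  have hcf := congrArg (MvPolynomial.coeff (Finsupp.single j 1)) h2
  simp [MvPolynomial.coeff_X', Finsupp.single_left_inj one_ne_zero, hij] at hcf
  exact hq hcf

lemma key (hq : q ≠ 0) {a b : ι} (hab : a ≠ b) :
    wfac K ι q a b *
      ((1 - tvar K ι b / tvar K ι a) /
        (cst K ι q - cst K ι q⁻¹ * (tvar K ι b / tvar K ι a))) =
    (1 - tvar K ι a / tvar K ι b) /
      (cst K ι q - cst K ι q⁻¹ * (tvar K ι a / tvar K ι b)) := by
  have ha := tvar_ne_zero K ι a
  have hb := tvar_ne_zero K ι b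
  have h1 := denom_ne_zero K ι q hq hab
  have h2 := denom_ne_zero K ι q hq hab.symm
  have hQ : cst K ι q ≠ 0 := cst_ne_zero K ι hq
  rw [wfac]
  rw [cst_inv] at h1 h2 ⊢
  have hba : tvar K ι b / tvar K ι a = (tvar K ι a / tvar K ι b)⁻¹ := by rw [inv_div]
  rw [hba] at h2 ⊢
  set x := tvar K ι a / tvar K ι b with hxdef
  have hx : x ≠ 0 := div_ne_zero ha hb
  set Q := cst K ι q with hQdef
  rw [div_mul_div_comm, div_eq_div_iff (mul_ne_zero h1 h2) h1]
  field_simp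
  ring

lemma extPerm_id_apply {n : ℕ} (σ : Equiv.Perm (Fin n)) (i : Fin n) :
    extPerm (Fin n) id Function.injective_id σ i = σ i := by
  unfold extPerm
  letI := Classical.decPred (· ∈ Set.range (id : Fin n → Fin n))
  simpa using Equiv.Perm.extendDomain_apply_image σ (Equiv.ofInjective id Function.injective_id) i


lemma renHom_exProd (n : ℕ) (f : Fin n → Fin n) (hf : Function.Injective f) :
    renHom K (Fin n) f hf (exProd K q n) =
      ∏ p ∈ Finset.univ.filter (fun p : Fin n × Fin n => p.1 < p.2),
        (1 - tvar K (Fin n) (f p.1) / tvar K (Fin n) (f p.2)) /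
          (cst K (Fin n) q - cst K (Fin n) q⁻¹ *
            (tvar K (Fin n) (f p.1) / tvar K (Fin n) (f p.2))) := by
  simp only [exProd, map_prod, map_div₀, map_sub, map_mul, map_one, renHom_tvar, renHom_cst]

lemma qWeight_mul_prod (hq : q ≠ 0) (n : ℕ) (σ : Equiv.Perm (Fin n)) :
    qWeight K (Fin n) q id σ *
      ∏ p ∈ Finset.univ.filter (fun p : Fin n × Fin n => p.1 < p.2),
        (1 - tvar K (Fin n) (σ p.1) / tvar K (Fin n) (σ p.2)) /
          (cst K (Fin n) q - cst K (Fin n) q⁻¹ *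
            (tvar K (Fin n) (σ p.1) / tvar K (Fin n) (σ p.2)))
      = exProd K q n := by
  classical
  set F : Fin n → Fin n → RatF K (Fin n) := fun i j =>
    (1 - tvar K (Fin n) i / tvar K (Fin n) j) /
      (cst K (Fin n) q - cst K (Fin n) q⁻¹ * (tvar K (Fin n) i / tvar K (Fin n) j)) with hF
  set S : Finset (Fin n × Fin n) := Finset.univ.filter (fun p => p.1 < p.2) with hS
  have hkey : ∀ p ∈ S.filter (fun p => ¬ σ p.1 < σ p.2),
      wfac K (Fin n) q (σ p.2) (σ p.1) * F (σ p.1) (σ p.2) = F (σ p.2) (σ p.1) := by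
    intro p hp
    obtain ⟨hpS, hns⟩ := Finset.mem_filter.1 hp
    have hp12 : p.1 < p.2 := (Finset.mem_filter.1 hpS).2
    have hne : σ p.2 ≠ σ p.1 := fun he =>
      absurd (σ.injective he) (ne_of_gt hp12)
    exact key K (Fin n) q hq hne
  have hA2 : S.filter (fun p => ¬ σ p.1 < σ p.2) =
      Finset.univ.filter (fun p : Fin n × Fin n => p.1 < p.2 ∧ σ p.2 < σ p.1) := by
    rw [hS, Finset.filter_filter]
    apply Finset.filter_congr
    intro p _
    constructor
    · rintro ⟨h1, h2⟩
      exact ⟨h1, lt_of_le_of_ne (not_lt.1 h2)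
        (fun he => absurd (σ.injective he) (ne_of_gt h1))⟩
    · rintro ⟨h1, h2⟩; exact ⟨h1, not_lt.2 h2.le⟩
  have hqw : qWeight K (Fin n) q id σ =
      ∏ p ∈ S.filter (fun p => ¬ σ p.1 < σ p.2), wfac K (Fin n) q (σ p.2) (σ p.1) := by
    rw [qWeight, hA2]; simp only [id_eq]
  have hsplit : ∏ p ∈ S, F (σ p.1) (σ p.2) =
      (∏ p ∈ S.filter (fun p => σ p.1 < σ p.2), F (σ p.1) (σ p.2)) *
        ∏ p ∈ S.filter (fun p => ¬ σ p.1 < σ p.2), F (σ p.1) (σ p.2) :=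
    (Finset.prod_filter_mul_prod_filter_not S _ _).symm
  have step1 : qWeight K (Fin n) q id σ * ∏ p ∈ S, F (σ p.1) (σ p.2) =
      (∏ p ∈ S.filter (fun p => σ p.1 < σ p.2), F (σ p.1) (σ p.2)) *
        ∏ p ∈ S.filter (fun p => ¬ σ p.1 < σ p.2), F (σ p.2) (σ p.1) := by
    rw [hsplit, hqw, mul_left_comm, ← Finset.prod_mul_distrib]
    rw [Finset.prod_congr rfl hkey]
  have step2 : (∏ p ∈ S.filter (fun p => σ p.1 < σ p.2), F (σ p.1) (σ p.2)) *
        ∏ p ∈ S.filter (fun p => ¬ σ p.1 < σ p.2), F (σ p.2) (σ p.1) =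
      ∏ p ∈ S, (if σ p.1 < σ p.2 then F (σ p.1) (σ p.2) else F (σ p.2) (σ p.1)) := by
    rw [← Finset.prod_filter_mul_prod_filter_not S (fun p => σ p.1 < σ p.2)]
    congr 1
    · exact Finset.prod_congr rfl fun p hp => by
        rw [if_pos (Finset.mem_filter.1 hp).2]
    · exact Finset.prod_congr rfl fun p hp => by
        rw [if_neg (Finset.mem_filter.1 hp).2]
  have hmemS : ∀ p : Fin n × Fin n, p ∈ S ↔ p.1 < p.2 := by
    intro p; rw [hS, Finset.mem_filter]; simp
  have step3 : ∏ p ∈ S, (if σ p.1 < σ p.2 then F (σ p.1) (σ p.2) else F (σ p.2) (σ p.1)) =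
      ∏ p ∈ S, F p.1 p.2 := by
    refine Finset.prod_nbij'
      (fun p => if σ p.1 < σ p.2 then (σ p.1, σ p.2) else (σ p.2, σ p.1))
      (fun p => if σ⁻¹ p.1 < σ⁻¹ p.2 then (σ⁻¹ p.1, σ⁻¹ p.2) else (σ⁻¹ p.2, σ⁻¹ p.1))
      ?_ ?_ ?_ ?_ ?_
    · intro p hp
      have h12 := (hmemS p).1 hp
      have hne : σ p.1 ≠ σ p.2 := fun he => absurd (σ.injective he) (ne_of_lt h12)
      rcases lt_or_gt_of_ne hne with h | h
      · rw [if_pos h]; exact (hmemS _).2 h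
      · rw [if_neg (not_lt.2 h.le)]; exact (hmemS _).2 h
    · intro p hp
      have h12 := (hmemS p).1 hp
      have hne : σ⁻¹ p.1 ≠ σ⁻¹ p.2 := fun he => absurd (σ⁻¹.injective he) (ne_of_lt h12)
      rcases lt_or_gt_of_ne hne with h | h
      · rw [if_pos h]; exact (hmemS _).2 h
      · rw [if_neg (not_lt.2 h.le)]; exact (hmemS _).2 h
    · intro p hp
      have h12 := (hmemS p).1 hp
      have hne : σ p.1 ≠ σ p.2 := fun he => absurd (σ.injective he) (ne_of_lt h12)
      rcases lt_or_gt_of_ne hne with h | h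
      · simp only [if_pos h, Equiv.Perm.inv_def, Equiv.symm_apply_apply, if_pos h12]
      · simp only [if_neg (not_lt.2 h.le), Equiv.Perm.inv_def, Equiv.symm_apply_apply,
          if_neg (not_lt.2 h12.le)]
    · intro p hp
      have h12 := (hmemS p).1 hp
      have hne : σ⁻¹ p.1 ≠ σ⁻¹ p.2 := fun he => absurd (σ⁻¹.injective he) (ne_of_lt h12)
      rcases lt_or_gt_of_ne hne with h | h
      · simp only [if_pos h, (show ∀ x, σ (σ⁻¹ x) = x from σ.apply_symm_apply), if_pos h12]
      · simp only [if_neg (not_lt.2 h.le), (show ∀ x, σ (σ⁻¹ x) = x from σ.apply_symm_apply),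
          if_neg (not_lt.2 h12.le)]
    · intro p hp
      have h12 := (hmemS p).1 hp
      have hne : σ p.1 ≠ σ p.2 := fun he => absurd (σ.injective he) (ne_of_lt h12)
      rcases lt_or_gt_of_ne hne with h | h
      · simp only [if_pos h]
      · simp only [if_neg (not_lt.2 h.le)]
  rw [step1, step2, step3, exProd]

/-- The rational function
`F(t_1,…,t_n) = ∏_{i<j} (1 − t_i/t_j)/(q − q⁻¹ t_i/t_j)` is `q`-symmetric:
`π(σ)F = F` for every `σ ∈ S_n`. -/
theorem exProd_qSymmetric
    (K : Type) [Field K] [CharZero K] (q : K) (hq : q ≠ 0) (hq2 : q ^ 2 ≠ 1)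
    (A : Type) [Ring A] [Algebra K A] (n : ℕ) (σ : Equiv.Perm (Fin n)) :
    piOp K (Fin n) A q id Function.injective_id σ (inF K (Fin n) A (exProd K q n)) =
      inF K (Fin n) A (exProd K q n) := by

  rw [piOp, inF_renA, ← map_mul]
  congr 1
  rw [renHom_exProd]
  have hext : ∀ i : Fin n, extPerm (Fin n) id Function.injective_id σ i = σ i :=
    extPerm_id_apply σ
  simp only [hext]
  exact qWeight_mul_prod K q hq n σ
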